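/- Let n ≥ 1, G : ℝⁿ → (n×n real symmetric matrices) smooth, V : ℝⁿ → ℝ smooth, and let ξ : ℝⁿ → ℝⁿ be smooth with £_ξ G = τ·G and £_ξ V = −τ·V for some smooth τ : ℝⁿ → ℝ. Suppose q : I → ℝⁿ and N : I → (0,∞) are smooth on an interval I and satisfy the Euler–Lagrange equations: for all t ∈ I and all κ, d/dt[(1/N) Σ_α G_{κα}(q) q̇^α] = (1/(2N)) Σ_{μ,ν} ∂G_{μν}/∂q^κ (q) q̇^μ q̇^ν − N ∂V/∂q^κ (q), together with the constraint Σ_{μ,ν} G_{μν}(q) q̇^μ q̇^ν + 2N² V(q) = 0. Then the quantity Q(t) = (1/N(t)) Σ_{κ,α} ξ^α(q(t)) G_{κα}(q(t)) q̇^κ(t) is constant on I. -/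

import Mathlib

open scoped BigOperators

/-- Partial derivative `∂f/∂q^α` of a scalar function on `ℝⁿ`. -/
noncomputable def pd {n : ℕ} (f : (Fin n → ℝ) → ℝ) (α : Fin n) (q : Fin n → ℝ) : ℝ :=
  fderiv ℝ f q (Pi.single α 1)

/-- Lie derivative `(£_ξ G)_{μν}`. -/
noncomputable def lieG {n : ℕ} (ξ : (Fin n → ℝ) → Fin n → ℝ)
    (G : (Fin n → ℝ) → Fin n → Fin n → ℝ) (q : Fin n → ℝ) (μ ν : Fin n) : ℝ :=
  ∑ α : Fin n, (ξ q α * pd (fun p => G p μ ν) α q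
      + pd (fun p => ξ p α) μ q * G q α ν
      + pd (fun p => ξ p α) ν q * G q μ α)

/-- Lie derivative `£_ξ V`. -/
noncomputable def lieV {n : ℕ} (ξ : (Fin n → ℝ) → Fin n → ℝ)
    (V : (Fin n → ℝ) → ℝ) (q : Fin n → ℝ) : ℝ :=
  ∑ α : Fin n, ξ q α * pd V α q

/-- if `£_ξ G = τ·G` and `£_ξ V = −τ·V`, then along any solution of the
Euler–Lagrange equations and the constraint, `Q = (1/N) Σ ξ^α G_{κα}(q) q̇^κ` is constant. -/
lemma clm_apply_eq_sum {n : ℕ} (L : (Fin n → ℝ) →L[ℝ] ℝ) (v : Fin n → ℝ) :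
    L v = ∑ i, v i * L (Pi.single i 1) := by
  have hv : (∑ i, v i • (Pi.single i 1 : Fin n → ℝ)) = v := by
    funext j
    simp [Finset.sum_apply, Pi.single_apply]
  conv_lhs => rw [← hv]
  rw [map_sum]
  simp

lemma hasDerivAt_comp_smooth {n : ℕ} {f : (Fin n → ℝ) → ℝ} (hf : ContDiff ℝ (⊤ : ℕ∞) f)
    {q : ℝ → Fin n → ℝ} {u : Fin n → ℝ} {t : ℝ} (hq : HasDerivAt q u t) :
    HasDerivAt (fun s => f (q s)) (∑ μ, u μ * pd f μ (q t)) t := by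
  have hd : HasFDerivAt f (fderiv ℝ f (q t)) (q t) :=
    (hf.differentiable (by simp) (q t)).hasFDerivAt
  have h := hd.comp_hasDerivAt t hq
  have he : fderiv ℝ f (q t) u = ∑ μ, u μ * pd f μ (q t) := clm_apply_eq_sum _ _
  rw [he] at h
  exact h

lemma swap12 {n : ℕ} (f : Fin n → Fin n → Fin n → ℝ) :
    ∑ a, ∑ b, ∑ c, f a b c = ∑ b, ∑ a, ∑ c, f a b c := Finset.sum_comm

lemma cycle3 {n : ℕ} (f : Fin n → Fin n → Fin n → ℝ) :
    ∑ a, ∑ b, ∑ c, f a b c = ∑ b, ∑ c, ∑ a, f a b c := by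
  rw [swap12 f]
  exact Finset.sum_congr rfl fun b _ => Finset.sum_comm

lemma key_algebra {n : ℕ} (Nt τt Vt : ℝ) (hN : Nt ≠ 0)
    (Gm : Fin n → Fin n → ℝ) (u ξv dV : Fin n → ℝ)
    (dG : Fin n → Fin n → Fin n → ℝ) (dξ : Fin n → Fin n → ℝ)
    (hsym : ∀ μ ν, Gm μ ν = Gm ν μ)
    (hlie : ∀ μ ν, (∑ α, (ξv α * dG α μ ν + dξ μ α * Gm α ν + dξ ν α * Gm μ α)) = τt * Gm μ ν)
    (hlieV : (∑ α, ξv α * dV α) = -τt * Vt)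
    (hcon : (∑ μ, ∑ ν, Gm μ ν * u μ * u ν) + 2 * Nt ^ 2 * Vt = 0) :
    ∑ κ, ((∑ μ, u μ * dξ μ κ) * ((1 / Nt) * ∑ α, Gm κ α * u α)
      + ξv κ * ((1 / (2 * Nt)) * (∑ μ, ∑ ν, dG κ μ ν * u μ * u ν) - Nt * dV κ)) = 0 := by
  have h1 : (∑ μ, ∑ ν, ∑ α, ξv α * dG α μ ν * u μ * u ν)
      + (∑ μ, ∑ ν, ∑ α, dξ μ α * Gm α ν * u μ * u ν)
      + (∑ μ, ∑ ν, ∑ α, dξ ν α * Gm μ α * u μ * u ν)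
      = τt * (∑ μ, ∑ ν, Gm μ ν * u μ * u ν) := by
    have e : ∀ μ ν : Fin n, (∑ α, ξv α * dG α μ ν * u μ * u ν)
        + (∑ α, dξ μ α * Gm α ν * u μ * u ν)
        + (∑ α, dξ ν α * Gm μ α * u μ * u ν) = τt * Gm μ ν * u μ * u ν := by
      intro μ ν
      calc (∑ α, ξv α * dG α μ ν * u μ * u ν)
            + (∑ α, dξ μ α * Gm α ν * u μ * u ν)
            + (∑ α, dξ ν α * Gm μ α * u μ * u ν)
          = ∑ α, (ξv α * dG α μ ν + dξ μ α * Gm α ν + dξ ν α * Gm μ α) * (u μ * u ν) := by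
            rw [← Finset.sum_add_distrib, ← Finset.sum_add_distrib]
            exact Finset.sum_congr rfl fun α _ => by ring
        _ = τt * Gm μ ν * u μ * u ν := by rw [← Finset.sum_mul, hlie μ ν]; ring
    calc (∑ μ, ∑ ν, ∑ α, ξv α * dG α μ ν * u μ * u ν)
          + (∑ μ, ∑ ν, ∑ α, dξ μ α * Gm α ν * u μ * u ν)
          + (∑ μ, ∑ ν, ∑ α, dξ ν α * Gm μ α * u μ * u ν)
        = ∑ μ, ∑ ν, ((∑ α, ξv α * dG α μ ν * u μ * u ν)
            + (∑ α, dξ μ α * Gm α ν * u μ * u ν)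
            + (∑ α, dξ ν α * Gm μ α * u μ * u ν)) := by
          simp only [← Finset.sum_add_distrib]
      _ = ∑ μ, ∑ ν, τt * Gm μ ν * u μ * u ν :=
          Finset.sum_congr rfl fun μ _ => Finset.sum_congr rfl fun ν _ => e μ ν
      _ = τt * (∑ μ, ∑ ν, Gm μ ν * u μ * u ν) := by
          simp only [Finset.mul_sum]
          exact Finset.sum_congr rfl fun μ _ => Finset.sum_congr rfl fun ν _ => by ring
  have h3 : (∑ μ, ∑ ν, ∑ α, dξ ν α * Gm μ α * u μ * u ν)
      = (∑ μ, ∑ ν, ∑ α, dξ μ α * Gm α ν * u μ * u ν) := by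
    rw [swap12 (fun μ ν α => dξ ν α * Gm μ α * u μ * u ν)]
    refine Finset.sum_congr rfl fun μ _ => Finset.sum_congr rfl fun ν _ =>
      Finset.sum_congr rfl fun α _ => ?_
    rw [hsym ν α]
    ring
  have g1 : (∑ κ, (∑ μ, u μ * dξ μ κ) * ((1 / Nt) * ∑ α, Gm κ α * u α))
      = (1 / Nt) * (∑ μ, ∑ ν, ∑ α, dξ μ α * Gm α ν * u μ * u ν) := by
    calc (∑ κ, (∑ μ, u μ * dξ μ κ) * ((1 / Nt) * ∑ α, Gm κ α * u α))
        = ∑ κ, ∑ μ, ∑ α, (1 / Nt) * (dξ μ κ * Gm κ α * u μ * u α) := by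
          refine Finset.sum_congr rfl fun κ _ => ?_
          rw [Finset.sum_mul]
          refine Finset.sum_congr rfl fun μ _ => ?_
          rw [Finset.mul_sum, Finset.mul_sum]
          exact Finset.sum_congr rfl fun α _ => by ring
      _ = ∑ μ, ∑ α, ∑ κ, (1 / Nt) * (dξ μ κ * Gm κ α * u μ * u α) :=
          cycle3 (fun κ μ α => (1 / Nt) * (dξ μ κ * Gm κ α * u μ * u α))
      _ = (1 / Nt) * (∑ μ, ∑ ν, ∑ α, dξ μ α * Gm α ν * u μ * u ν) := by
          simp only [Finset.mul_sum]
  have g2 : (∑ κ, ξv κ * ((1 / (2 * Nt)) * (∑ μ, ∑ ν, dG κ μ ν * u μ * u ν) - Nt * dV κ))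
      = (1 / (2 * Nt)) * (∑ μ, ∑ ν, ∑ α, ξv α * dG α μ ν * u μ * u ν)
        - Nt * (∑ α, ξv α * dV α) := by
    calc (∑ κ, ξv κ * ((1 / (2 * Nt)) * (∑ μ, ∑ ν, dG κ μ ν * u μ * u ν) - Nt * dV κ))
        = ∑ κ, ((∑ μ, ∑ ν, (1 / (2 * Nt)) * (ξv κ * dG κ μ ν * u μ * u ν))
            - Nt * (ξv κ * dV κ)) := by
          refine Finset.sum_congr rfl fun κ _ => ?_
          rw [mul_sub]
          congr 1
          · rw [Finset.mul_sum, Finset.mul_sum]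
            refine Finset.sum_congr rfl fun μ _ => ?_
            rw [Finset.mul_sum, Finset.mul_sum]
            exact Finset.sum_congr rfl fun ν _ => by ring
          · ring
      _ = (∑ κ, ∑ μ, ∑ ν, (1 / (2 * Nt)) * (ξv κ * dG κ μ ν * u μ * u ν))
            - ∑ κ, Nt * (ξv κ * dV κ) := Finset.sum_sub_distrib _ _
      _ = (1 / (2 * Nt)) * (∑ μ, ∑ ν, ∑ α, ξv α * dG α μ ν * u μ * u ν)
            - Nt * (∑ α, ξv α * dV α) := by
          rw [cycle3 (fun κ μ ν => (1 / (2 * Nt)) * (ξv κ * dG κ μ ν * u μ * u ν))]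
          simp only [Finset.mul_sum]
  have hK : (∑ μ, ∑ ν, Gm μ ν * u μ * u ν) = -(2 * Nt ^ 2 * Vt) := by linarith
  have hS1 : (∑ μ, ∑ ν, ∑ α, ξv α * dG α μ ν * u μ * u ν)
      = τt * (∑ μ, ∑ ν, Gm μ ν * u μ * u ν)
        - 2 * (∑ μ, ∑ ν, ∑ α, dξ μ α * Gm α ν * u μ * u ν) := by linarith
  rw [Finset.sum_add_distrib, g1, g2, hlieV, hS1, hK]
  field_simp
  ring

theorem conserved_charge_of_conformal_killing (n : ℕ) (hn : 1 ≤ n)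
    (G : (Fin n → ℝ) → Fin n → Fin n → ℝ) (V : (Fin n → ℝ) → ℝ)
    (hGsmooth : ∀ μ ν, ContDiff ℝ (⊤ : ℕ∞) fun q => G q μ ν)
    (hGsymm : ∀ q μ ν, G q μ ν = G q ν μ)
    (hVsmooth : ContDiff ℝ (⊤ : ℕ∞) V)
    (ξ : (Fin n → ℝ) → Fin n → ℝ) (τ : (Fin n → ℝ) → ℝ)
    (hξsmooth : ContDiff ℝ (⊤ : ℕ∞) ξ)
    (hτsmooth : ContDiff ℝ (⊤ : ℕ∞) τ)
    (hlieG : ∀ q μ ν, lieG ξ G q μ ν = τ q * G q μ ν)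
    (hlieV : ∀ q, lieV ξ V q = -(τ q) * V q)
    (I : Set ℝ) (hI : I.OrdConnected)
    (q : ℝ → Fin n → ℝ) (qd : ℝ → Fin n → ℝ) (N : ℝ → ℝ)
    (hq : ∀ t ∈ I, HasDerivAt q (qd t) t)
    (hNpos : ∀ t ∈ I, 0 < N t)
    (hNcont : ContinuousOn N I)
    -- the Euler–Lagrange equations for q^κ:
    -- d/dt[(1/N) Σ_α G_{κα}(q) q̇^α] = (1/(2N)) Σ_{μν} ∂G_{μν}/∂q^κ q̇^μ q̇^ν − N ∂V/∂q^κ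
    (hEL : ∀ t ∈ I, ∀ κ : Fin n,
      HasDerivAt (fun s => (1 / N s) * ∑ α : Fin n, G (q s) κ α * qd s α)
        ((1 / (2 * N t)) * (∑ μ : Fin n, ∑ ν : Fin n,
            pd (fun p => G p μ ν) κ (q t) * qd t μ * qd t ν)
          - N t * pd V κ (q t)) t)
    -- the constraint equation: Σ_{μν} G_{μν}(q) q̇^μ q̇^ν + 2N²V(q) = 0
    (hcon : ∀ t ∈ I, (∑ μ : Fin n, ∑ ν : Fin n, G (q t) μ ν * qd t μ * qd t ν)
        + 2 * (N t) ^ 2 * V (q t) = 0) :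
    ∀ t ∈ I, ∀ t' ∈ I,
      (1 / N t) * (∑ κ : Fin n, ∑ α : Fin n, ξ (q t) α * G (q t) κ α * qd t κ)
        = (1 / N t') * (∑ κ : Fin n, ∑ α : Fin n, ξ (q t') α * G (q t') κ α * qd t' κ) := by
  -- the conserved charge as a single function
  set Qf : ℝ → ℝ := fun s => ∑ κ : Fin n, ξ (q s) κ * ((1 / N s) * ∑ α : Fin n, G (q s) κ α * qd s α)
    with hQf
  -- the statement's expression equals Qf
  have hQeq : ∀ s : ℝ,
      (1 / N s) * (∑ κ : Fin n, ∑ α : Fin n, ξ (q s) α * G (q s) κ α * qd s κ) = Qf s := by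
    intro s
    rw [hQf]
    simp only [Finset.mul_sum]
    rw [Finset.sum_comm]
    refine Finset.sum_congr rfl fun κ _ => Finset.sum_congr rfl fun α _ => ?_
    rw [hGsymm (q s) α κ]
    ring
  -- Qf has zero derivative on I
  have hQ : ∀ t ∈ I, HasDerivAt Qf 0 t := by
    intro t ht
    have hNne : N t ≠ 0 := (hNpos t ht).ne'
    have hterm : ∀ κ : Fin n,
        HasDerivAt (fun s => ξ (q s) κ * ((1 / N s) * ∑ α : Fin n, G (q s) κ α * qd s α))
          ((∑ μ, qd t μ * pd (fun p => ξ p κ) μ (q t))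
              * ((1 / N t) * ∑ α : Fin n, G (q t) κ α * qd t α)
            + ξ (q t) κ * ((1 / (2 * N t)) * (∑ μ : Fin n, ∑ ν : Fin n,
                pd (fun p => G p μ ν) κ (q t) * qd t μ * qd t ν)
              - N t * pd V κ (q t))) t := by
      intro κ
      have hξκ : ContDiff ℝ (⊤ : ℕ∞) fun p => ξ p κ := (contDiff_pi.mp hξsmooth) κ
      exact (hasDerivAt_comp_smooth hξκ (hq t ht)).mul (hEL t ht κ)
    have hsum := HasDerivAt.fun_sum (fun κ (_ : κ ∈ Finset.univ) => hterm κ)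
    have hzero : (∑ κ : Fin n, ((∑ μ, qd t μ * pd (fun p => ξ p κ) μ (q t))
              * ((1 / N t) * ∑ α : Fin n, G (q t) κ α * qd t α)
            + ξ (q t) κ * ((1 / (2 * N t)) * (∑ μ : Fin n, ∑ ν : Fin n,
                pd (fun p => G p μ ν) κ (q t) * qd t μ * qd t ν)
              - N t * pd V κ (q t)))) = 0 := by
      refine key_algebra (N t) (τ (q t)) (V (q t)) hNne (G (q t)) (qd t) (ξ (q t))
        (fun κ => pd V κ (q t)) (fun d μ ν => pd (fun p => G p μ ν) d (q t))
        (fun μ κ => pd (fun p => ξ p κ) μ (q t)) (hGsymm (q t)) ?_ ?_ (hcon t ht)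
      · intro μ ν
        simpa [lieG] using hlieG (q t) μ ν
      · simpa [lieV] using hlieV (q t)
    rw [hzero] at hsum
    exact hsum
  -- constancy from zero derivative on an order-connected set
  have key : ∀ a ∈ I, ∀ b ∈ I, a ≤ b → Qf b = Qf a := by
    intro a ha b hb hab
    have hIcc : Set.Icc a b ⊆ I := hI.out ha hb
    have hcontQ : ContinuousOn Qf (Set.Icc a b) := fun x hx =>
      (hQ x (hIcc hx)).continuousAt.continuousWithinAt
    have hder : ∀ x ∈ Set.Ico a b, HasDerivWithinAt Qf 0 (Set.Ici x) x := fun x hx =>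
      (hQ x (hIcc ⟨hx.1, hx.2.le⟩)).hasDerivWithinAt
    exact constant_of_has_deriv_right_zero hcontQ hder b (Set.right_mem_Icc.2 hab)
  intro t ht t' ht'
  rw [hQeq t, hQeq t']
  rcases le_total t t' with h | h
  · exact (key t ht t' ht' h).symm
  · exact key t' ht' t ht h
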